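/- For the same family of states ρ_N := (2/N) Σ_{k=0}^{N/2−1} |ψ_k⟩⟨ψ_k| with |ψ_k⟩ = (|0^{N−k}1^k⟩ + |1^{N−k}0^k⟩)/√2 and Z = Σ_i σ^z_i, one has I_L(ρ_N, Z) = (2/N)² Σ_{k=0}^{N/2} (N−2k)², which is O(N); hence I_L(ρ_N,Z)/F(ρ_N,Z) → 0 as N → ∞. -/

import Mathlib

open Matrix Finset Filter Topology

/-- `I_L(ρ,A) := -(1/2) tr([ρ,A]²)` (a real quantity; we take the real part). -/
noncomputable def commIL {ι : Type*} [Fintype ι] [DecidableEq ι]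
    (ρ A : Matrix ι ι ℂ) : ℝ :=
  (-(1 / 2) * Matrix.trace ((ρ * A - A * ρ) * (ρ * A - A * ρ))).re

/-- Quantum Fisher information via a spectral decomposition of `ρ`. -/
noncomputable def qfi {ι : Type*} [Fintype ι] (lam : ι → ℝ) (v : ι → ι → ℂ)
    (A : Matrix ι ι ℂ) : ℝ :=
  2 * ∑ a : ι, ∑ b : ι,
    if 0 < lam a + lam b then
      (lam a - lam b) ^ 2 / (lam a + lam b) * Complex.normSq (star (v a) ⬝ᵥ (A *ᵥ v b))
    else 0

/-- `Z = ∑_i σ^z_i` as a diagonal matrix on the computational basis of `N` qubits. -/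
noncomputable def pauliZTotal (N : ℕ) : Matrix (Fin N → Fin 2) (Fin N → Fin 2) ℂ :=
  Matrix.diagonal fun s => ∑ i : Fin N, if s i = 0 then (1 : ℂ) else -1

/-- The basis string `0^{N-k}1^k` (last `k` qubits equal to 1). -/
def baseStr (N k : ℕ) : Fin N → Fin 2 := fun i => if N - k ≤ (i : ℕ) then 1 else 0

/-- The basis string `1^{N-k}0^k`. -/
def flipStr (N k : ℕ) : Fin N → Fin 2 := fun i => if N - k ≤ (i : ℕ) then 0 else 1

/-- `|ψ_k⟩ = (|0^{N-k}1^k⟩ + |1^{N-k}0^k⟩)/√2`. -/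
noncomputable def psiK (N k : ℕ) : (Fin N → Fin 2) → ℂ := fun s =>
  ((if s = baseStr N k then 1 else 0) + (if s = flipStr N k then 1 else 0)) /
    (Real.sqrt 2 : ℂ)

/-- `ρ_N = (2/N) ∑_{k=0}^{N/2-1} |ψ_k⟩⟨ψ_k|`. -/
noncomputable def rhoN (N : ℕ) : Matrix (Fin N → Fin 2) (Fin N → Fin 2) ℂ :=
  ∑ k ∈ Finset.range (N / 2),
    ((2 / (N : ℝ) : ℝ) : ℂ) • Matrix.vecMulVec (psiK N k) (star (psiK N k))


lemma baseStr_inj {N k l : ℕ} (hk : k ≤ N) (hl : l ≤ N) (h : baseStr N k = baseStr N l) :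
    k = l := by
  by_contra hne
  rcases Nat.lt_or_ge k l with hkl | hge
  · have h0 : N - l < N := by omega
    have := congrFun h ⟨N - l, h0⟩
    simp only [baseStr] at this
    rw [if_neg (by simp; omega), if_pos (by simp)] at this
    exact absurd this (by decide)
  · have hlk : l < k := by omega
    have h0 : N - k < N := by omega
    have := congrFun h ⟨N - k, h0⟩
    simp only [baseStr] at this
    rw [if_pos (by simp), if_neg (by simp; omega)] at this
    exact absurd this (by decide)

lemma flipStr_inj {N k l : ℕ} (hk : k ≤ N) (hl : l ≤ N) (h : flipStr N k = flipStr N l) :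
    k = l := by
  refine baseStr_inj hk hl ?_
  funext i
  have := congrFun h i
  simp only [baseStr, flipStr] at this ⊢
  split_ifs at this ⊢ <;> simp_all

lemma baseStr_ne_flipStr {N k l : ℕ} (hk : k < N) (hl : l < N) :
    baseStr N k ≠ flipStr N l := by
  intro h
  have h0 : 0 < N := by omega
  have := congrFun h ⟨0, h0⟩
  simp only [baseStr, flipStr] at this
  rw [if_neg (by simp; omega), if_neg (by simp; omega)] at this
  exact absurd this (by decide)

lemma psiK_base {N k l : ℕ} (hk : k < N) (hl : l < N) :
    psiK N l (baseStr N k) = (if k = l then (1 : ℂ) else 0) / (Real.sqrt 2 : ℂ) := by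
  simp only [psiK]
  rw [if_neg (baseStr_ne_flipStr hk hl)]
  congr 1
  by_cases h : k = l
  · subst h; simp
  · rw [if_neg (fun hh => h (baseStr_inj hk.le hl.le hh))]; rw [if_neg h]; ring

lemma psiK_flip {N k l : ℕ} (hk : k < N) (hl : l < N) :
    psiK N l (flipStr N k) = (if k = l then (1 : ℂ) else 0) / (Real.sqrt 2 : ℂ) := by
  simp only [psiK]
  rw [if_neg (fun hh => baseStr_ne_flipStr hl hk hh.symm)]
  congr 1
  by_cases h : k = l
  · subst h; simp
  · rw [if_neg (fun hh => h (flipStr_inj hk.le hl.le hh))]; rw [if_neg h]; ring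

lemma star_psiK (N k : ℕ) : star (psiK N k) = psiK N k := by
  funext s
  simp only [Pi.star_apply, psiK, star_div₀, star_add, apply_ite, star_one, star_zero]
  congr 1
  rw [show ((Real.sqrt 2 : ℝ) : ℂ) = Complex.ofReal (Real.sqrt 2) from rfl]
  exact Complex.conj_ofReal _

lemma psiK_dot {N k : ℕ} (w : (Fin N → Fin 2) → ℂ) :
    psiK N k ⬝ᵥ w = (w (baseStr N k) + w (flipStr N k)) / (Real.sqrt 2 : ℂ) := by
  simp only [dotProduct, psiK, div_mul_eq_mul_div, add_mul, ite_mul, one_mul, zero_mul,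
    ← Finset.sum_div, Finset.sum_add_distrib, Finset.sum_ite_eq', Finset.mem_univ, if_pos]


noncomputable def dZ (N : ℕ) : (Fin N → Fin 2) → ℂ := fun s =>
  ∑ i : Fin N, if s i = 0 then (1 : ℂ) else -1

lemma pauliZ_mulVec {N : ℕ} (w : (Fin N → Fin 2) → ℂ) :
    pauliZTotal N *ᵥ w = fun s => dZ N s * w s := by
  funext s
  exact Matrix.mulVec_diagonal _ _ _

lemma conj_dZ {N : ℕ} (s : Fin N → Fin 2) : (starRingEnd ℂ) (dZ N s) = dZ N s := by
  simp only [dZ, map_sum, apply_ite, _root_.map_one, map_neg]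

lemma count_aux {N k : ℕ} (hk : k ≤ N) (a b : ℂ) :
    (∑ i : Fin N, if N - k ≤ (i : ℕ) then a else b) = k * a + (N - k : ℕ) * b := by
  rw [Fin.sum_univ_eq_sum_range (fun i => if N - k ≤ i then a else b) N]
  rw [Finset.sum_ite, Finset.sum_const, Finset.sum_const]
  have h1 : Finset.filter (fun i => N - k ≤ i) (Finset.range N) = Finset.Ico (N - k) N := by
    ext i; simp [Finset.mem_Ico]; omega
  have h2 : Finset.filter (fun i => ¬ N - k ≤ i) (Finset.range N) = Finset.range (N - k) := by
    ext i; simp; omega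
  rw [h1, h2, Nat.card_Ico, Finset.card_range]
  have : N - (N - k) = k := by omega
  rw [this, nsmul_eq_mul, nsmul_eq_mul]

lemma dZ_base {N k : ℕ} (hk : k ≤ N) : dZ N (baseStr N k) = (N : ℂ) - 2 * k := by
  have : dZ N (baseStr N k) = ∑ i : Fin N, if N - k ≤ (i : ℕ) then (-1 : ℂ) else 1 := by
    refine Finset.sum_congr rfl fun i _ => ?_
    simp only [baseStr]
    split_ifs with h1 h2 h2 <;> simp_all
  rw [this, count_aux hk]
  have : ((N - k : ℕ) : ℂ) = (N : ℂ) - k := by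
    push_cast [hk]; ring
  rw [this]; ring

lemma dZ_flip {N k : ℕ} (hk : k ≤ N) : dZ N (flipStr N k) = 2 * k - (N : ℂ) := by
  have : dZ N (flipStr N k) = ∑ i : Fin N, if N - k ≤ (i : ℕ) then (1 : ℂ) else -1 := by
    refine Finset.sum_congr rfl fun i _ => ?_
    simp only [flipStr]
    split_ifs with h1 h2 h2 <;> simp_all
  rw [this, count_aux hk]
  have : ((N - k : ℕ) : ℂ) = (N : ℂ) - k := by
    push_cast [hk]; ring
  rw [this]; ring

lemma sqrt2_mul_self : ((Real.sqrt 2 : ℝ) : ℂ) * ((Real.sqrt 2 : ℝ) : ℂ) = 2 := by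
  rw [← Complex.ofReal_mul, Real.mul_self_sqrt (by norm_num)]
  norm_num

lemma sqrt2_ne_zero : ((Real.sqrt 2 : ℝ) : ℂ) ≠ 0 := by
  simp [Real.sqrt_eq_zero']

lemma psiK_orth {N k l : ℕ} (hk : k < N) (hl : l < N) :
    star (psiK N k) ⬝ᵥ psiK N l = if k = l then (1 : ℂ) else 0 := by
  rw [star_psiK, psiK_dot, psiK_base hk hl, psiK_flip hk hl, ← add_div, div_div,
    sqrt2_mul_self]
  split_ifs <;> norm_num

lemma psiK_Z {N k l : ℕ} (hk : k < N) (hl : l < N) :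
    star (psiK N k) ⬝ᵥ (pauliZTotal N *ᵥ psiK N l) = 0 := by
  rw [star_psiK, pauliZ_mulVec, psiK_dot, psiK_base hk hl, psiK_flip hk hl,
    dZ_base hk.le, dZ_flip hk.le]
  split_ifs <;> ring

lemma psiK_ZZ {N k l : ℕ} (hk : k < N) (hl : l < N) :
    star (psiK N k) ⬝ᵥ (pauliZTotal N *ᵥ (pauliZTotal N *ᵥ psiK N l)) =
      if k = l then ((N : ℂ) - 2 * k) ^ 2 else 0 := by
  rw [star_psiK, pauliZ_mulVec (psiK N l), pauliZ_mulVec, psiK_dot, psiK_base hk hl,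
    psiK_flip hk hl, dZ_base hk.le, dZ_flip hk.le]
  split_ifs with h
  · field_simp
    linear_combination (-((N : ℂ) - 2 * k) ^ 2) * sqrt2_mul_self
  · ring

section helpers
variable {ι : Type*} [Fintype ι] [DecidableEq ι]

lemma trace_vmv (x y : ι → ℂ) : Matrix.trace (vecMulVec x y) = x ⬝ᵥ y := rfl

lemma vmv_mul (x y : ι → ℂ) (M : Matrix ι ι ℂ) :
    vecMulVec x y * M = vecMulVec x (y ᵥ* M) := by
  ext i j
  simp [Matrix.mul_apply, vecMulVec_apply, Matrix.vecMul, dotProduct, Finset.mul_sum, mul_assoc]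

lemma mul_vmv (x y : ι → ℂ) (M : Matrix ι ι ℂ) :
    M * vecMulVec x y = vecMulVec (M *ᵥ x) y := by
  ext i j
  simp only [Matrix.mul_apply, vecMulVec_apply, Matrix.mulVec, dotProduct, Finset.sum_mul]
  exact Finset.sum_congr rfl fun m _ => by ring

lemma vmv_mul_vmv (x y u w : ι → ℂ) :
    vecMulVec x y * vecMulVec u w = (y ⬝ᵥ u) • vecMulVec x w := by
  ext i j
  simp only [Matrix.mul_apply, vecMulVec_apply, Matrix.smul_apply, dotProduct, Finset.sum_mul,
    smul_eq_mul, Finset.mul_sum]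
  exact Finset.sum_congr rfl fun m _ => by ring

lemma vmv_mulVec (x y w : ι → ℂ) : vecMulVec x y *ᵥ w = (y ⬝ᵥ w) • x := by
  funext i
  simp only [Matrix.mulVec, dotProduct, vecMulVec_apply, Pi.smul_apply, smul_eq_mul,
    Finset.sum_mul]
  exact Finset.sum_congr rfl fun m _ => by ring
end helpers

set_option linter.unusedSectionVars false

section generic
variable {ι : Type*} [Fintype ι] [DecidableEq ι]

lemma trace_comm_sq {κ : Type*} (s : Finset κ) (c : κ → ℂ) (x : κ → ι → ℂ)
    (A : Matrix ι ι ℂ) (ρ : Matrix ι ι ℂ)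
    (hρ : ρ = ∑ k ∈ s, c k • vecMulVec (x k) (star (x k))) :
    Matrix.trace ((ρ * A - A * ρ) * (ρ * A - A * ρ)) =
      ∑ k ∈ s, ∑ l ∈ s, c k * c l *
        (2 * ((star (x k) ⬝ᵥ (A *ᵥ x l)) * (star (x l) ⬝ᵥ (A *ᵥ x k)))
         - (star (x k) ⬝ᵥ (A *ᵥ (A *ᵥ x l))) * (star (x l) ⬝ᵥ x k)
         - (star (x k) ⬝ᵥ x l) * (star (x l) ⬝ᵥ (A *ᵥ (A *ᵥ x k)))) := by
  subst hρ
  have hC : (∑ k ∈ s, c k • vecMulVec (x k) (star (x k))) * A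
      - A * (∑ k ∈ s, c k • vecMulVec (x k) (star (x k)))
      = ∑ k ∈ s, c k • (vecMulVec (x k) (star (x k) ᵥ* A)
          - vecMulVec (A *ᵥ (x k)) (star (x k))) := by
    rw [Finset.sum_mul, Finset.mul_sum, ← Finset.sum_sub_distrib]
    refine Finset.sum_congr rfl fun k _ => ?_
    rw [smul_mul_assoc, mul_smul_comm, ← smul_sub, vmv_mul, mul_vmv]
  rw [hC, Finset.sum_mul_sum, Matrix.trace_sum]
  refine Finset.sum_congr rfl fun k hk => ?_
  rw [Matrix.trace_sum]
  refine Finset.sum_congr rfl fun l hl => ?_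
  rw [smul_mul_smul_comm, Matrix.trace_smul, smul_eq_mul]
  congr 1
  rw [sub_mul, mul_sub, mul_sub, vmv_mul_vmv, vmv_mul_vmv, vmv_mul_vmv, vmv_mul_vmv]
  simp only [Matrix.trace_sub, Matrix.trace_smul, trace_vmv, smul_eq_mul]
  have e1 : ∀ (u w : ι → ℂ), star u ᵥ* A ⬝ᵥ w = star u ⬝ᵥ (A *ᵥ w) := fun u w =>
    (Matrix.dotProduct_mulVec _ _ _).symm
  have e2 : ∀ (u w : ι → ℂ), star u ᵥ* A ⬝ᵥ (A *ᵥ w) = star u ⬝ᵥ (A *ᵥ (A *ᵥ w)) := fun u w =>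
    (Matrix.dotProduct_mulVec _ _ _).symm
  have e3 : ∀ (u w : ι → ℂ), u ⬝ᵥ star w = star w ⬝ᵥ u := fun u w => dotProduct_comm _ _
  have e4 : ∀ (u w : ι → ℂ), u ⬝ᵥ (star w ᵥ* A) = star w ⬝ᵥ (A *ᵥ u) := fun u w => by
    rw [dotProduct_comm, ← Matrix.dotProduct_mulVec]
  simp only [e1, e2, e3, e4]
  ring
end generic



lemma part1 {N : ℕ} (hN : 0 < N) (hE : Even N) :
    commIL (rhoN N) (pauliZTotal N) =
      (2 / (N : ℝ)) ^ 2 * ∑ k ∈ Finset.range (N / 2 + 1), ((N : ℝ) - 2 * k) ^ 2 := by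
  have htr := trace_comm_sq (Finset.range (N / 2)) (fun _ => ((2 / (N : ℝ) : ℝ) : ℂ))
      (fun k => psiK N k) (pauliZTotal N) (rhoN N) rfl
  have key : Matrix.trace ((rhoN N * pauliZTotal N - pauliZTotal N * rhoN N) *
      (rhoN N * pauliZTotal N - pauliZTotal N * rhoN N)) =
      (((-2) * (2 / (N : ℝ)) ^ 2 * ∑ k ∈ Finset.range (N / 2), ((N : ℝ) - 2 * k) ^ 2 : ℝ) : ℂ) := by
    rw [htr]
    have hstep : ∀ k ∈ Finset.range (N / 2), ∀ l ∈ Finset.range (N / 2),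
        ((2 / (N : ℝ) : ℝ) : ℂ) * ((2 / (N : ℝ) : ℝ) : ℂ) *
        (2 * ((star (psiK N k) ⬝ᵥ (pauliZTotal N *ᵥ psiK N l)) *
              (star (psiK N l) ⬝ᵥ (pauliZTotal N *ᵥ psiK N k)))
         - (star (psiK N k) ⬝ᵥ (pauliZTotal N *ᵥ (pauliZTotal N *ᵥ psiK N l))) *
              (star (psiK N l) ⬝ᵥ psiK N k)
         - (star (psiK N k) ⬝ᵥ psiK N l) *
              (star (psiK N l) ⬝ᵥ (pauliZTotal N *ᵥ (pauliZTotal N *ᵥ psiK N k)))) =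
        if l = k then
          ((2 / (N : ℝ) : ℝ) : ℂ) * ((2 / (N : ℝ) : ℝ) : ℂ) * ((-2) * ((N : ℂ) - 2 * k) ^ 2)
        else 0 := by
      intro k hk l hl
      have hkN : k < N := by simp only [Finset.mem_range] at hk; omega
      have hlN : l < N := by simp only [Finset.mem_range] at hl; omega
      rw [psiK_Z hkN hlN, psiK_Z hlN hkN, psiK_ZZ hkN hlN, psiK_ZZ hlN hkN,
        psiK_orth hkN hlN, psiK_orth hlN hkN]
      by_cases h : l = k
      · subst h
        simp only [if_pos rfl]
        push_cast
        ring
      · simp only [if_neg h, if_neg (Ne.symm h)]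
        ring
    calc ∑ k ∈ Finset.range (N / 2), ∑ l ∈ Finset.range (N / 2), _
        = ∑ k ∈ Finset.range (N / 2), ∑ l ∈ Finset.range (N / 2),
            (if l = k then ((2 / (N : ℝ) : ℝ) : ℂ) * ((2 / (N : ℝ) : ℝ) : ℂ) *
              ((-2) * ((N : ℂ) - 2 * k) ^ 2) else 0) :=
          Finset.sum_congr rfl fun k hk => Finset.sum_congr rfl fun l hl => hstep k hk l hl
      _ = ∑ k ∈ Finset.range (N / 2), ((2 / (N : ℝ) : ℝ) : ℂ) * ((2 / (N : ℝ) : ℝ) : ℂ) *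
            ((-2) * ((N : ℂ) - 2 * k) ^ 2) := by
          refine Finset.sum_congr rfl fun k hk => ?_
          rw [Finset.sum_ite_eq' (Finset.range (N / 2)) k, if_pos hk]
      _ = (((-2) * (2 / (N : ℝ)) ^ 2 * ∑ k ∈ Finset.range (N / 2), ((N : ℝ) - 2 * k) ^ 2 : ℝ) : ℂ) := by
          push_cast
          rw [Finset.mul_sum]
          refine Finset.sum_congr rfl fun k hk => ?_
          ring
  show (-(1 / 2 : ℂ) * _).re = _
  rw [key]
  rw [show (-(1 / 2 : ℂ)) * (((-2) * (2 / (N : ℝ)) ^ 2 *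
      ∑ k ∈ Finset.range (N / 2), ((N : ℝ) - 2 * k) ^ 2 : ℝ) : ℂ) =
      (((2 / (N : ℝ)) ^ 2 * ∑ k ∈ Finset.range (N / 2), ((N : ℝ) - 2 * k) ^ 2 : ℝ) : ℂ) by
    push_cast; ring]
  rw [Complex.ofReal_re]
  rw [Finset.sum_range_succ]
  obtain ⟨t, ht⟩ := hE
  have h2 : N / 2 = t := by omega
  have : ((N : ℝ) - 2 * (N / 2 : ℕ)) ^ 2 = 0 := by
    rw [h2]
    have : (N : ℝ) = 2 * t := by rw [ht]; push_cast; ring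
    rw [this]; ring
  rw [this, add_zero]

section spectral
variable {ι : Type*} [Fintype ι] [DecidableEq ι]

lemma dot_sum (u : ι → ℂ) {κ : Type*} (s : Finset κ) (f : κ → ι → ℂ) :
    u ⬝ᵥ (∑ c ∈ s, f c) = ∑ c ∈ s, u ⬝ᵥ f c := by
  simp only [dotProduct, Finset.sum_apply, Finset.mul_sum]
  exact Finset.sum_comm

lemma completeness (v : ι → ι → ℂ)
    (hortho : ∀ a b, star (v a) ⬝ᵥ v b = if a = b then (1 : ℂ) else 0)
    (w : ι → ℂ) : ∑ c, (star (v c) ⬝ᵥ w) • v c = w := by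
  set V : Matrix ι ι ℂ := Matrix.of (fun i a => v a i) with hV
  have h1 : Vᴴ * V = 1 := by
    ext a b
    rw [Matrix.one_apply, ← hortho a b]
    simp only [Matrix.mul_apply, Matrix.conjTranspose_apply, hV, Matrix.of_apply, dotProduct,
      Pi.star_apply]
  have h2 : V * Vᴴ = 1 := mul_eq_one_comm.mpr h1
  funext i
  have h3 : w i = ∑ j, ∑ c, v c i * ((starRingEnd ℂ) (v c j) * w j) := by
    conv_lhs => rw [← Matrix.one_mulVec w, ← h2]
    simp only [Matrix.mulVec, Matrix.mul_apply, dotProduct, Matrix.conjTranspose_apply,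
      Matrix.of_apply, hV, Finset.sum_mul, mul_assoc, Complex.star_def]
  rw [Finset.sum_apply, h3, Finset.sum_comm]
  refine Finset.sum_congr rfl fun c _ => ?_
  simp only [Pi.smul_apply, smul_eq_mul, dotProduct, Pi.star_apply, Finset.sum_mul,
    Complex.star_def]
  exact Finset.sum_congr rfl fun j _ => by ring

noncomputable def qd (v : ι → ι → ℂ) (d : ι → ℂ) (a b : ι) : ℂ :=
  star (v a) ⬝ᵥ (Matrix.diagonal d *ᵥ v b)

lemma qd_def (v : ι → ι → ℂ) (d : ι → ℂ) (a b : ι) :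
    qd v d a b = star (v a) ⬝ᵥ (Matrix.diagonal d *ᵥ v b) := rfl

lemma qd_conj (v : ι → ι → ℂ) (d : ι → ℂ) (hd : ∀ i, (starRingEnd ℂ) (d i) = d i) (a b : ι) :
    qd v d b a = (starRingEnd ℂ) (qd v d a b) := by
  simp only [qd, dotProduct, Matrix.mulVec_diagonal, map_sum]
  refine Finset.sum_congr rfl fun i _ => ?_
  simp only [Pi.star_apply, Complex.star_def, _root_.map_mul, Complex.conj_conj]
  rw [hd]
  ring

lemma qd_mul (v : ι → ι → ℂ) (d : ι → ℂ) (hd : ∀ i, (starRingEnd ℂ) (d i) = d i) (a b : ι) :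
    qd v d a b * qd v d b a = (Complex.normSq (qd v d a b) : ℂ) := by
  rw [qd_conj v d hd a b, Complex.mul_conj]

lemma qd_nsq_symm (v : ι → ι → ℂ) (d : ι → ℂ) (hd : ∀ i, (starRingEnd ℂ) (d i) = d i) (a b : ι) :
    Complex.normSq (qd v d b a) = Complex.normSq (qd v d a b) := by
  rw [qd_conj v d hd a b, Complex.normSq_conj]

lemma trace_comm_sq_spectral (lam : ι → ℝ) (v : ι → ι → ℂ)
    (hortho : ∀ a b, star (v a) ⬝ᵥ v b = if a = b then (1 : ℂ) else 0)
    (d : ι → ℂ) (hd : ∀ i, (starRingEnd ℂ) (d i) = d i)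
    (ρ : Matrix ι ι ℂ)
    (hρ : ρ = ∑ a, ((lam a : ℝ) : ℂ) • vecMulVec (v a) (star (v a))) :
    Matrix.trace ((ρ * Matrix.diagonal d - Matrix.diagonal d * ρ) *
        (ρ * Matrix.diagonal d - Matrix.diagonal d * ρ)) =
      -(((∑ a, ∑ b, (lam a - lam b) ^ 2 * Complex.normSq (qd v d a b) : ℝ)) : ℂ) := by
  classical
  have F3 : ∀ a b, star (v a) ⬝ᵥ (Matrix.diagonal d *ᵥ (Matrix.diagonal d *ᵥ v b)) =
      ∑ c, qd v d a c * qd v d c b := by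
    intro a b
    rw [Matrix.dotProduct_mulVec, ← completeness v hortho (Matrix.diagonal d *ᵥ v b), dot_sum]
    refine Finset.sum_congr rfl fun c _ => ?_
    rw [dotProduct_smul, smul_eq_mul, ← Matrix.dotProduct_mulVec, ← qd_def, ← qd_def]
    exact mul_comm _ _
  rw [trace_comm_sq Finset.univ (fun a => ((lam a : ℝ) : ℂ)) v (Matrix.diagonal d) ρ hρ]
  have hterm : ∀ a b, ((lam a : ℝ) : ℂ) * ((lam b : ℝ) : ℂ) *
      (2 * ((star (v a) ⬝ᵥ (Matrix.diagonal d *ᵥ v b)) * (star (v b) ⬝ᵥ (Matrix.diagonal d *ᵥ v a)))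
       - (star (v a) ⬝ᵥ (Matrix.diagonal d *ᵥ (Matrix.diagonal d *ᵥ v b))) * (star (v b) ⬝ᵥ v a)
       - (star (v a) ⬝ᵥ v b) * (star (v b) ⬝ᵥ (Matrix.diagonal d *ᵥ (Matrix.diagonal d *ᵥ v a)))) =
      2 * ((lam a : ℝ) : ℂ) * ((lam b : ℝ) : ℂ) * (Complex.normSq (qd v d a b) : ℂ)
       - (if b = a then ((lam a : ℝ) : ℂ) * ((lam a : ℝ) : ℂ) *
            ∑ c, (Complex.normSq (qd v d a c) : ℂ) else 0)
       - (if a = b then ((lam a : ℝ) : ℂ) * ((lam a : ℝ) : ℂ) *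
            ∑ c, (Complex.normSq (qd v d a c) : ℂ) else 0) := by
    intro a b
    rw [F3, F3, hortho, hortho, ← qd_def, ← qd_def, qd_mul v d hd]
    by_cases h : a = b
    · subst h
      simp only [if_pos rfl]
      have hc : ∀ c, qd v d a c * qd v d c a = (Complex.normSq (qd v d a c) : ℂ) :=
        fun c => qd_mul v d hd a c
      simp only [hc, eq_self_iff_true, if_true]
      ring
    · simp only [if_neg h, if_neg (Ne.symm h)]
      ring
  simp only [hterm]
  have hsplit : ∀ a : ι, ∑ b : ι,
      (2 * ((lam a : ℝ) : ℂ) * ((lam b : ℝ) : ℂ) * (Complex.normSq (qd v d a b) : ℂ)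
       - (if b = a then ((lam a : ℝ) : ℂ) * ((lam a : ℝ) : ℂ) *
            ∑ c, (Complex.normSq (qd v d a c) : ℂ) else 0)
       - (if a = b then ((lam a : ℝ) : ℂ) * ((lam a : ℝ) : ℂ) *
            ∑ c, (Complex.normSq (qd v d a c) : ℂ) else 0)) =
      (∑ b : ι, 2 * ((lam a : ℝ) : ℂ) * ((lam b : ℝ) : ℂ) * (Complex.normSq (qd v d a b) : ℂ))
       - 2 * (((lam a : ℝ) : ℂ) * ((lam a : ℝ) : ℂ) *
            ∑ c, (Complex.normSq (qd v d a c) : ℂ)) := by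
    intro a
    rw [Finset.sum_sub_distrib, Finset.sum_sub_distrib,
      Finset.sum_ite_eq' Finset.univ a, Finset.sum_ite_eq Finset.univ a]
    simp only [Finset.mem_univ, if_true]
    ring
  rw [Finset.sum_congr rfl fun a _ => hsplit a, Finset.sum_sub_distrib]
  have c1 : (∑ a : ι, ∑ b : ι, 2 * ((lam a : ℝ) : ℂ) * ((lam b : ℝ) : ℂ) *
      (Complex.normSq (qd v d a b) : ℂ)) =
      (((∑ a, ∑ b, 2 * lam a * lam b * Complex.normSq (qd v d a b) : ℝ)) : ℂ) := by
    push_cast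
    rfl
  have c2 : (∑ a : ι, 2 * (((lam a : ℝ) : ℂ) * ((lam a : ℝ) : ℂ) *
      ∑ c, (Complex.normSq (qd v d a c) : ℂ))) =
      (((∑ a, ∑ c, 2 * (lam a * lam a * Complex.normSq (qd v d a c)) : ℝ)) : ℂ) := by
    push_cast
    simp only [Finset.mul_sum]
  rw [c1, c2, ← Complex.ofReal_sub, ← Complex.ofReal_neg]
  congr 1
  have hsym : (∑ a : ι, ∑ b : ι, lam b ^ 2 * Complex.normSq (qd v d a b)) =
      ∑ a : ι, ∑ b : ι, lam a ^ 2 * Complex.normSq (qd v d a b) := by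
    rw [Finset.sum_comm]
    exact Finset.sum_congr rfl fun a _ => Finset.sum_congr rfl fun b _ => by
      rw [qd_nsq_symm v d hd]
  have expand : (∑ a : ι, ∑ b : ι, (lam a - lam b) ^ 2 * Complex.normSq (qd v d a b)) =
      (∑ a : ι, ∑ b : ι, lam a ^ 2 * Complex.normSq (qd v d a b))
      + (∑ a : ι, ∑ b : ι, lam b ^ 2 * Complex.normSq (qd v d a b))
      - ∑ a : ι, ∑ b : ι, 2 * lam a * lam b * Complex.normSq (qd v d a b) := by
    rw [← Finset.sum_add_distrib, ← Finset.sum_sub_distrib]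
    refine Finset.sum_congr rfl fun a _ => ?_
    rw [← Finset.sum_add_distrib, ← Finset.sum_sub_distrib]
    exact Finset.sum_congr rfl fun b _ => by ring
  rw [expand, hsym]
  have : (∑ a : ι, ∑ c : ι, 2 * (lam a * lam a * Complex.normSq (qd v d a c))) =
      2 * ∑ a : ι, ∑ b : ι, lam a ^ 2 * Complex.normSq (qd v d a b) := by
    rw [Finset.mul_sum]
    refine Finset.sum_congr rfl fun a _ => ?_
    rw [Finset.mul_sum]
    exact Finset.sum_congr rfl fun b _ => by ring
  rw [this]
  ring
end spectral


section part2
variable {ι : Type*} [Fintype ι] [DecidableEq ι]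

lemma sum_mulVec {κ : Type*} (s : Finset κ) (f : κ → Matrix ι ι ℂ) (w : ι → ℂ) :
    (∑ k ∈ s, f k) *ᵥ w = ∑ k ∈ s, f k *ᵥ w := by
  funext i
  simp only [Matrix.mulVec, dotProduct, Finset.sum_apply, Matrix.sum_apply, Finset.sum_mul]
  exact Finset.sum_comm

lemma rhoN_sq {N : ℕ} (hN : 0 < N) :
    rhoN N * rhoN N = ((2 / (N : ℝ) : ℝ) : ℂ) • rhoN N := by
  unfold rhoN
  rw [Finset.sum_mul, Finset.smul_sum]
  refine Finset.sum_congr rfl fun k hk => ?_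
  have hkN : k < N := by simp only [Finset.mem_range] at hk; omega
  rw [Finset.mul_sum]
  calc (∑ l ∈ Finset.range (N / 2),
        (((2 / (N : ℝ) : ℝ) : ℂ) • vecMulVec (psiK N k) (star (psiK N k))) *
        (((2 / (N : ℝ) : ℝ) : ℂ) • vecMulVec (psiK N l) (star (psiK N l))))
      = ∑ l ∈ Finset.range (N / 2), (if l = k then
          (((2 / (N : ℝ) : ℝ) : ℂ) * ((2 / (N : ℝ) : ℝ) : ℂ)) •
            vecMulVec (psiK N k) (star (psiK N k)) else 0) := by
        refine Finset.sum_congr rfl fun l hl => ?_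
        have hlN : l < N := by simp only [Finset.mem_range] at hl; omega
        rw [smul_mul_smul_comm, vmv_mul_vmv, psiK_orth hkN hlN]
        by_cases h : l = k
        · subst h; simp
        · rw [if_neg (fun hh => h hh.symm), if_neg h]
          simp
    _ = (((2 / (N : ℝ) : ℝ) : ℂ) * ((2 / (N : ℝ) : ℝ) : ℂ)) •
          vecMulVec (psiK N k) (star (psiK N k)) := by
        rw [Finset.sum_ite_eq' (Finset.range (N / 2)) k, if_pos hk]
    _ = ((2 / (N : ℝ) : ℝ) : ℂ) • (((2 / (N : ℝ) : ℝ) : ℂ) •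
          vecMulVec (psiK N k) (star (psiK N k))) := by rw [smul_smul]
end part2

section part2b
variable {ι : Type*} [Fintype ι] [DecidableEq ι]

lemma eig_vec (lam : ι → ℝ) (v : ι → ι → ℂ)
    (hortho : ∀ a b, star (v a) ⬝ᵥ v b = if a = b then (1 : ℂ) else 0)
    (ρ : Matrix ι ι ℂ)
    (hρ : ρ = ∑ a, ((lam a : ℝ) : ℂ) • vecMulVec (v a) (star (v a))) (a : ι) :
    ρ *ᵥ v a = ((lam a : ℝ) : ℂ) • v a := by
  rw [hρ, _root_.sum_mulVec]
  have hstep : ∀ b : ι, (((lam b : ℝ) : ℂ) • vecMulVec (v b) (star (v b))) *ᵥ v a =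
      if b = a then ((lam b : ℝ) : ℂ) • v b else 0 := by
    intro b
    rw [Matrix.smul_mulVec, vmv_mulVec, hortho]
    by_cases h : b = a
    · subst h; simp
    · rw [if_neg h, if_neg h]; simp
  simp only [hstep]
  rw [Finset.sum_ite_eq' Finset.univ a]
  simp

lemma vne_zero (v : ι → ι → ℂ)
    (hortho : ∀ a b, star (v a) ⬝ᵥ v b = if a = b then (1 : ℂ) else 0) (a : ι) :
    ∃ i, v a i ≠ 0 := by
  by_contra h
  push_neg at h
  have := hortho a a
  rw [if_pos rfl] at this
  simp only [dotProduct, Pi.star_apply] at this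
  rw [Finset.sum_eq_zero (fun i _ => by rw [h i, mul_zero])] at this
  exact one_ne_zero this.symm

lemma lam_sq (lam : ι → ℝ) (v : ι → ι → ℂ)
    (hortho : ∀ a b, star (v a) ⬝ᵥ v b = if a = b then (1 : ℂ) else 0)
    (ρ : Matrix ι ι ℂ)
    (hρ : ρ = ∑ a, ((lam a : ℝ) : ℂ) • vecMulVec (v a) (star (v a)))
    (μ : ℝ) (hsq : ρ * ρ = ((μ : ℝ) : ℂ) • ρ) (a : ι) :
    lam a * lam a = μ * lam a := by
  have h1 := eig_vec lam v hortho ρ hρ a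
  have h2 : (ρ * ρ) *ᵥ v a = (((lam a : ℝ) : ℂ) * ((lam a : ℝ) : ℂ)) • v a := by
    rw [← Matrix.mulVec_mulVec, h1, Matrix.mulVec_smul, h1, smul_smul]
  have h3 : (ρ * ρ) *ᵥ v a = (((μ : ℝ) : ℂ) * ((lam a : ℝ) : ℂ)) • v a := by
    rw [hsq, Matrix.smul_mulVec, h1, smul_smul]
  obtain ⟨i, hi⟩ := vne_zero v hortho a
  have h4 : (((lam a : ℝ) : ℂ) * ((lam a : ℝ) : ℂ)) * v a i
      = (((μ : ℝ) : ℂ) * ((lam a : ℝ) : ℂ)) * v a i := by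
    have := congrFun (h2.symm.trans h3) i
    simpa [Pi.smul_apply, smul_eq_mul] using this
  have h5 : (((lam a : ℝ) : ℂ) * ((lam a : ℝ) : ℂ)) = ((μ : ℝ) : ℂ) * ((lam a : ℝ) : ℂ) :=
    mul_right_cancel₀ hi h4
  exact_mod_cast h5

lemma lam_le (lam : ι → ℝ) (μ : ℝ) (hμ : 0 ≤ μ) (hlam0 : ∀ a, 0 ≤ lam a)
    (hsq : ∀ a, lam a * lam a = μ * lam a) (a : ι) : lam a ≤ μ := by
  rcases eq_or_lt_of_le (hlam0 a) with h | h
  · rw [← h]; exact hμ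
  · have := hsq a
    nlinarith

lemma qfi_ge (lam : ι → ℝ) (v : ι → ι → ℂ) (A : Matrix ι ι ℂ) (μ : ℝ) (hμ : 0 < μ)
    (hlam0 : ∀ a, 0 ≤ lam a) (hlam2 : ∀ a, lam a ≤ μ) :
    μ⁻¹ * ∑ a, ∑ b, (lam a - lam b) ^ 2 * Complex.normSq (star (v a) ⬝ᵥ (A *ᵥ v b)) ≤
      qfi lam v A := by
  unfold qfi
  have key : ∀ a b : ι, μ⁻¹ * ((lam a - lam b) ^ 2 *
      Complex.normSq (star (v a) ⬝ᵥ (A *ᵥ v b))) ≤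
      2 * (if 0 < lam a + lam b then
        (lam a - lam b) ^ 2 / (lam a + lam b) * Complex.normSq (star (v a) ⬝ᵥ (A *ᵥ v b))
      else 0) := by
    intro a b
    set n := Complex.normSq (star (v a) ⬝ᵥ (A *ᵥ v b)) with hn
    have hn0 : 0 ≤ n := Complex.normSq_nonneg _
    by_cases h : 0 < lam a + lam b
    · rw [if_pos h]
      have hs : lam a + lam b ≤ 2 * μ := by
        have := hlam2 a; have := hlam2 b; linarith
      have hnum : 0 ≤ 2 * ((lam a - lam b) ^ 2 * n) := by positivity
      have hd : 2 * ((lam a - lam b) ^ 2 * n) / (2 * μ) ≤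
          2 * ((lam a - lam b) ^ 2 * n) / (lam a + lam b) :=
        div_le_div_of_nonneg_left hnum h hs
      have he1 : 2 * ((lam a - lam b) ^ 2 * n) / (2 * μ) =
          μ⁻¹ * ((lam a - lam b) ^ 2 * n) := by
        field_simp
      have he2 : 2 * ((lam a - lam b) ^ 2 * n) / (lam a + lam b) =
          2 * ((lam a - lam b) ^ 2 / (lam a + lam b) * n) := by
        rw [div_mul_eq_mul_div, mul_div_assoc]
      calc μ⁻¹ * ((lam a - lam b) ^ 2 * n) = 2 * ((lam a - lam b) ^ 2 * n) / (2 * μ) := he1.symm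
        _ ≤ 2 * ((lam a - lam b) ^ 2 * n) / (lam a + lam b) := hd
        _ = 2 * ((lam a - lam b) ^ 2 / (lam a + lam b) * n) := he2
    · rw [if_neg h]
      have ha : lam a = 0 := le_antisymm (by have := hlam0 b; linarith [not_lt.mp h]) (hlam0 a)
      have hb : lam b = 0 := le_antisymm (by have := hlam0 a; linarith [not_lt.mp h]) (hlam0 b)
      rw [ha, hb]
      simp
  calc μ⁻¹ * ∑ a, ∑ b, (lam a - lam b) ^ 2 * Complex.normSq (star (v a) ⬝ᵥ (A *ᵥ v b))
      = ∑ a, ∑ b, μ⁻¹ * ((lam a - lam b) ^ 2 * Complex.normSq (star (v a) ⬝ᵥ (A *ᵥ v b))) := by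
        rw [Finset.mul_sum]
        exact Finset.sum_congr rfl fun a _ => by rw [Finset.mul_sum]
    _ ≤ ∑ a, ∑ b, 2 * (if 0 < lam a + lam b then
          (lam a - lam b) ^ 2 / (lam a + lam b) * Complex.normSq (star (v a) ⬝ᵥ (A *ᵥ v b))
        else 0) :=
        Finset.sum_le_sum fun a _ => Finset.sum_le_sum fun b _ => key a b
    _ = 2 * ∑ a, ∑ b, (if 0 < lam a + lam b then
          (lam a - lam b) ^ 2 / (lam a + lam b) * Complex.normSq (star (v a) ⬝ᵥ (A *ᵥ v b))
        else 0) := by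
        rw [Finset.mul_sum]
        exact Finset.sum_congr rfl fun a _ => by rw [Finset.mul_sum]
end part2b

lemma commIL_spectral {N : ℕ} (hN : 0 < N) (hE : Even N)
    (lam : (Fin N → Fin 2) → ℝ) (v : (Fin N → Fin 2) → (Fin N → Fin 2) → ℂ)
    (hortho : ∀ a b, star (v a) ⬝ᵥ v b = if a = b then (1 : ℂ) else 0)
    (hdecN : rhoN N = ∑ a, ((lam a : ℝ) : ℂ) • Matrix.vecMulVec (v a) (star (v a))) :
    commIL (rhoN N) (pauliZTotal N) = (1 / 2) *
      ∑ a, ∑ b, (lam a - lam b) ^ 2 *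
        Complex.normSq (star (v a) ⬝ᵥ (pauliZTotal N *ᵥ v b)) := by
  have hZ : pauliZTotal N = Matrix.diagonal (dZ N) := rfl
  have htr := trace_comm_sq_spectral lam v hortho (dZ N) (fun i => conj_dZ i) (rhoN N) hdecN
  show (-(1 / 2 : ℂ) * _).re = _
  rw [hZ] at *
  rw [htr]
  have hqd : ∀ a b, qd v (dZ N) a b = star (v a) ⬝ᵥ (Matrix.diagonal (dZ N) *ᵥ v b) :=
    fun a b => rfl
  rw [show (-(1 / 2 : ℂ)) * (-(((∑ a, ∑ b, (lam a - lam b) ^ 2 *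
      Complex.normSq (qd v (dZ N) a b) : ℝ)) : ℂ)) =
      (((1 / 2) * (∑ a, ∑ b, (lam a - lam b) ^ 2 * Complex.normSq (qd v (dZ N) a b) : ℝ) : ℝ) : ℂ) by
    push_cast; ring]
  rw [Complex.ofReal_re]
  simp only [hqd]


/-- `I_L(ρ_N, Z) = (2/N)² ∑_{k=0}^{N/2} (N-2k)²` (which is `O(N)`), and
hence — with `F(ρ_N,Z)` computed from any family of spectral decompositions of the
`ρ_N` — the ratio `I_L(ρ_N,Z)/F(ρ_N,Z)` tends to `0` as (even) `N → ∞`. -/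
theorem commIL_rhoN_and_ratio_tendsto_zero
    (lam : ∀ N : ℕ, (Fin N → Fin 2) → ℝ)
    (v : ∀ N : ℕ, (Fin N → Fin 2) → (Fin N → Fin 2) → ℂ)
    (hortho : ∀ N, ∀ a b, star (v N a) ⬝ᵥ v N b = if a = b then (1 : ℂ) else 0)
    (hlam : ∀ N a, 0 ≤ lam N a)
    (hdec : ∀ N, 0 < N → Even N →
      rhoN N = ∑ a, ((lam N a : ℝ) : ℂ) • Matrix.vecMulVec (v N a) (star (v N a))) :
    (∀ N : ℕ, 0 < N → Even N →
      commIL (rhoN N) (pauliZTotal N) =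
        (2 / (N : ℝ)) ^ 2 * ∑ k ∈ Finset.range (N / 2 + 1), ((N : ℝ) - 2 * k) ^ 2) ∧
    Tendsto (fun m : ℕ =>
        commIL (rhoN (2 * m + 2)) (pauliZTotal (2 * m + 2)) /
          qfi (lam (2 * m + 2)) (v (2 * m + 2)) (pauliZTotal (2 * m + 2)))
      atTop (𝓝 0) := by
  refine ⟨fun N hN hE => part1 hN hE, ?_⟩
  have hbounds : ∀ m : ℕ,
      0 ≤ commIL (rhoN (2 * m + 2)) (pauliZTotal (2 * m + 2)) /
        qfi (lam (2 * m + 2)) (v (2 * m + 2)) (pauliZTotal (2 * m + 2)) ∧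
      commIL (rhoN (2 * m + 2)) (pauliZTotal (2 * m + 2)) /
        qfi (lam (2 * m + 2)) (v (2 * m + 2)) (pauliZTotal (2 * m + 2)) ≤ 1 / ((m : ℝ) + 1) := by
    intro m
    set N := 2 * m + 2 with hNdef
    have hN : 0 < N := by omega
    have hE : Even N := ⟨m + 1, by omega⟩
    have hNR : (0 : ℝ) < (N : ℝ) := by exact_mod_cast hN
    -- commIL positive
    have hval := part1 hN hE
    have hcpos : 0 < commIL (rhoN N) (pauliZTotal N) := by
      rw [hval]
      apply mul_pos (by positivity)
      apply Finset.sum_pos' (fun k _ => sq_nonneg _)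
      refine ⟨0, Finset.mem_range.mpr (by omega), ?_⟩
      have h2k : ((N : ℝ) - 2 * (0 : ℕ)) ^ 2 = (N : ℝ) ^ 2 := by norm_num
      rw [h2k]
      positivity
    -- spectral form and qfi bound
    have hspec := commIL_spectral hN hE (lam N) (v N) (hortho N) (hdec N hN hE)
    have hμ : (0 : ℝ) < 2 / (N : ℝ) := by positivity
    have hlamle : ∀ a, lam N a ≤ 2 / (N : ℝ) := by
      refine lam_le (lam N) _ hμ.le (hlam N) ?_
      exact fun a => lam_sq (lam N) (v N) (hortho N) (rhoN N) (hdec N hN hE) _ (rhoN_sq hN) a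
    have hqfi := qfi_ge (lam N) (v N) (pauliZTotal N) (2 / (N : ℝ)) hμ (hlam N) hlamle
    have hinv : (2 / (N : ℝ))⁻¹ = (N : ℝ) / 2 := by
      rw [inv_div]
    set S := ∑ a, ∑ b, (lam N a - lam N b) ^ 2 *
        Complex.normSq (star (v N a) ⬝ᵥ (pauliZTotal N *ᵥ v N b)) with hS
    have hNc : (N : ℝ) * commIL (rhoN N) (pauliZTotal N) =
        (2 / (N : ℝ))⁻¹ * S := by
      rw [hspec, hinv]; ring
    have hNq : (N : ℝ) * commIL (rhoN N) (pauliZTotal N) ≤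
        qfi (lam N) (v N) (pauliZTotal N) := by
      rw [hNc]; exact hqfi
    have hNcpos : 0 < (N : ℝ) * commIL (rhoN N) (pauliZTotal N) := by positivity
    have hqpos : 0 < qfi (lam N) (v N) (pauliZTotal N) := lt_of_lt_of_le hNcpos hNq
    constructor
    · exact div_nonneg hcpos.le hqpos.le
    · have step1 : commIL (rhoN N) (pauliZTotal N) / qfi (lam N) (v N) (pauliZTotal N) ≤
          commIL (rhoN N) (pauliZTotal N) / ((N : ℝ) * commIL (rhoN N) (pauliZTotal N)) :=
        div_le_div_of_nonneg_left hcpos.le hNcpos hNq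
      have step2 : commIL (rhoN N) (pauliZTotal N) /
          ((N : ℝ) * commIL (rhoN N) (pauliZTotal N)) = 1 / (N : ℝ) := by
        rw [div_eq_div_iff (by positivity : (0:ℝ) < (N : ℝ) * commIL (rhoN N) (pauliZTotal N)).ne' hNR.ne']
        ring
      have step3 : 1 / (N : ℝ) ≤ 1 / ((m : ℝ) + 1) := by
        apply one_div_le_one_div_of_le (by positivity)
        have : (m : ℝ) + 1 ≤ (2 * m + 2 : ℕ) := by push_cast; linarith
        rw [hNdef]; exact this
      calc commIL (rhoN N) (pauliZTotal N) / qfi (lam N) (v N) (pauliZTotal N)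
          ≤ commIL (rhoN N) (pauliZTotal N) / ((N : ℝ) * commIL (rhoN N) (pauliZTotal N)) := step1
        _ = 1 / (N : ℝ) := step2
        _ ≤ 1 / ((m : ℝ) + 1) := step3
  exact tendsto_of_tendsto_of_tendsto_of_le_of_le tendsto_const_nhds
    tendsto_one_div_add_atTop_nhds_zero_nat
    (fun m => (hbounds m).1) (fun m => (hbounds m).2)
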